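/- arXiv:2212.14171 — 7 statements merged into one kernel-verified Lean document; each statement's English description precedes it below -/
import Mathlib

section
/- There is a family G of subsets of ℕ×ℕ with |G| = 𝔡 and a ⊆*-decreasing sequence (cₖ)_{k<ω} of subsets of ℕ×ℕ such that each cₖ has infinite intersection with every member of G, but no c ⊆* cₖ for all k has infinite intersection with every member of G. Concretely: let F ⊆ ℕ^ℕ be a dominating family of size 𝔡, G = { b_f : f ∈ F } where b_f = {(i,n) : n > f(i)}, and cₖ = {(i,n) : i ≥ k}. -/
open Set

/-- `a ⊆* b` for subsets of an arbitrary type. -/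
def ASubG {α : Type*} (a b : Set α) : Prop := (a \ b).Finite

/-- `f ≤* g` : eventual domination. -/
def EvLE (f g : ℕ → ℕ) : Prop := ∀ᶠ n in Filter.atTop, f n ≤ g n

/-- The dominating number 𝔡. -/
noncomputable def dNum : Cardinal :=
  sInf {c | ∃ D : Set (ℕ → ℕ), (∀ f : ℕ → ℕ, ∃ d ∈ D, EvLE f d) ∧ c = Cardinal.mk D}

/-- The region strictly above the graph of `f`. -/
def aboveGraph (f : ℕ → ℕ) : Set (ℕ × ℕ) := {p | f p.1 < p.2}

/-- `c k = {(i,n) : i ≥ k}`. -/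
def tailCol (k : ℕ) : Set (ℕ × ℕ) := {p | k ≤ p.1}

lemma aboveGraph_inj : Function.Injective aboveGraph := by
  intro f g h
  funext i
  have h1 : ∀ n, f i < n ↔ g i < n := by
    intro n
    constructor
    · intro hn; have : (i, n) ∈ aboveGraph f := hn; rw [h] at this; exact this
    · intro hn; have : (i, n) ∈ aboveGraph g := hn; rw [← h] at this; exact this
  have h2 : g i ≤ f i := Nat.lt_succ_iff.mp ((h1 (f i + 1)).mp (Nat.lt_succ_self _))
  have h3 : f i ≤ g i := Nat.lt_succ_iff.mp ((h1 (g i + 1)).mpr (Nat.lt_succ_self _))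
  omega

/-- There is a family `G = {b_f : f ∈ F}` (for `F` a dominating family of size 𝔡)
of subsets of ℕ×ℕ of cardinality 𝔡, and a ⊆*-decreasing sequence `(cₖ)` of subsets
of ℕ×ℕ each meeting every member of `G` in an infinite set, such that no
`c ⊆* cₖ` (for all `k`) has infinite intersection with every member of `G`. -/
theorem stmt4 :
    ∃ F : Set (ℕ → ℕ), (∀ g : ℕ → ℕ, ∃ f ∈ F, EvLE g f) ∧
      Cardinal.mk (Set.image aboveGraph F) = dNum ∧
      (∀ k : ℕ, ASubG (tailCol (k + 1)) (tailCol k)) ∧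
      (∀ k : ℕ, ∀ f ∈ F, (tailCol k ∩ aboveGraph f).Infinite) ∧
      ∀ c : Set (ℕ × ℕ), (∀ k : ℕ, ASubG c (tailCol k)) →
        ¬ ∀ f ∈ F, (c ∩ aboveGraph f).Infinite := by
  -- the defining set of dNum is nonempty, so the inf is attained
  have hne : {c | ∃ D : Set (ℕ → ℕ), (∀ f : ℕ → ℕ, ∃ d ∈ D, EvLE f d) ∧
      c = Cardinal.mk D}.Nonempty := by
    exact ⟨Cardinal.mk (Set.univ : Set (ℕ → ℕ)), Set.univ,
      fun f => ⟨f, Set.mem_univ f, Filter.Eventually.of_forall fun n => le_refl _⟩, rfl⟩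
  have hmem := csInf_mem hne
  obtain ⟨F, hFdom, hFcard⟩ := hmem
  refine ⟨F, hFdom, ?_, ?_, ?_, ?_⟩
  · exact (Cardinal.mk_image_eq aboveGraph_inj).trans hFcard.symm
  · intro k
    have : tailCol (k + 1) \ tailCol k = ∅ := by
      ext ⟨i, n⟩
      simp only [tailCol, Set.mem_diff, Set.mem_setOf_eq, Set.mem_empty_iff_false,
        iff_false, not_and, not_le]
      intro h
      omega
    rw [ASubG, this]
    exact Set.finite_empty
  · intro k f _
    apply Set.infinite_of_injective_forall_mem
      (f := fun m : ℕ => ((m + k : ℕ), f (m + k) + 1))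
    · intro a b hab
      simp only [Prod.mk.injEq] at hab
      omega
    · intro m
      exact ⟨by simp [tailCol], by simp [aboveGraph]⟩
  · intro c hc hinf
    -- each column of c is finite
    have hcol : ∀ i : ℕ, {n | (i, n) ∈ c}.Finite := by
      intro i
      have h1 : (c \ tailCol (i + 1)).Finite := hc (i + 1)
      apply Set.Finite.of_finite_image (f := fun n => ((i : ℕ), n))
      · apply h1.subset
        rintro p ⟨n, hn, rfl⟩
        exact ⟨hn, by simp [tailCol]⟩
      · intro a _ b _ hab
        simpa using hab
    -- define g dominating each column
    set g : ℕ → ℕ := fun i => sSup {n | (i, n) ∈ c} with hg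
    obtain ⟨f, hfF, hfdom⟩ := hFdom g
    obtain ⟨N, hN⟩ := Filter.eventually_atTop.mp hfdom
    have hsub : c ∩ aboveGraph f ⊆ c \ tailCol N := by
      rintro ⟨i, n⟩ ⟨hcin, habv⟩
      refine ⟨hcin, fun hti => ?_⟩
      have hiN : N ≤ i := hti
      have hle : n ≤ g i := le_csSup ((hcol i).bddAbove) hcin
      have : g i ≤ f i := hN i hiN
      exact absurd habv (by simp only [aboveGraph, Set.mem_setOf_eq]; omega)
    exact (hinf f hfF) ((hc N).subset hsub)
end

section
/- Let H be a family of infinite subsets of ℕ with |H| < 𝔟 and let f : ℕ → ℕ. Then there exists a strictly increasing π : ℕ → ℕ with π(0) = 0 such that for every b ∈ H, |b ∩ [π(n), π(n+1))| ≥ f(n) for all but finitely many n. -/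
open Set

/-- The unbounding number 𝔟. -/
noncomputable def bNum : Cardinal :=
  sInf {c | ∃ H : Set (ℕ → ℕ), (¬ ∃ h, ∀ f ∈ H, EvLE f h) ∧ c = Cardinal.mk H}

/-- For a family `H` of infinite subsets of ℕ with `|H| < 𝔟` and any `f : ℕ → ℕ`,
there is a partition function `π` (strictly increasing, `π 0 = 0`) such that for
every `b ∈ H`, `|b ∩ [π n, π (n+1))| ≥ f n` for all but finitely many `n`. -/
theorem stmt5 (H : Set (Set ℕ)) (hH : ∀ b ∈ H, b.Infinite)
    (hcard : Cardinal.mk H < bNum) (f : ℕ → ℕ) :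
    ∃ π : ℕ → ℕ, StrictMono π ∧ π 0 = 0 ∧
      ∀ b ∈ H, ∀ᶠ n in Filter.atTop,
        f n ≤ (b ∩ Set.Ico (π n) (π (n + 1))).ncard := by
  classical
  set F : ℕ → ℕ := fun k => (Finset.range (k+1)).sup f with hF
  have hex : ∀ b ∈ H, ∀ k : ℕ, ∃ m, F k ≤ (b ∩ Set.Ico k m).ncard := by
    intro b hb k
    have hinf : (b ∩ Set.Ici k).Infinite := by
      have heq : b ∩ Set.Ici k = b \ Set.Iio k := by
        ext x; simp [Set.mem_Ici, Set.mem_Iio, not_lt]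
      rw [heq]
      exact (hH b hb).diff (Set.finite_Iio k)
    obtain ⟨t, ht, hcardt⟩ := hinf.exists_subset_card_eq (F k)
    refine ⟨t.sup id + 1, ?_⟩
    have hsub : (↑t : Set ℕ) ⊆ b ∩ Set.Ico k (t.sup id + 1) := by
      intro x hx
      have hx' := ht hx
      exact ⟨hx'.1, hx'.2, Nat.lt_succ_of_le (Finset.le_sup (f := id) hx)⟩
    calc F k = (↑t : Set ℕ).ncard := by simp [hcardt]
      _ ≤ _ := Set.ncard_le_ncard hsub ((Set.finite_Ico _ _).inter_of_right _)
  choose! g hg using hex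
  have hbdd : ∃ h : ℕ → ℕ, ∀ b ∈ H, EvLE (g b) h := by
    by_contra hc
    push_neg at hc
    have hmem : Cardinal.mk ↥(g '' H) ∈
        {c | ∃ H' : Set (ℕ → ℕ), (¬ ∃ h, ∀ f ∈ H', EvLE f h) ∧ c = Cardinal.mk H'} := by
      refine ⟨g '' H, ?_, rfl⟩
      rintro ⟨h, hh⟩
      obtain ⟨b, hb, hnb⟩ := hc h
      exact hnb (hh _ ⟨b, hb, rfl⟩)
    have hle : bNum ≤ Cardinal.mk ↥(g '' H) := csInf_le' hmem
    have h2 : Cardinal.mk ↥(g '' H) ≤ Cardinal.mk ↥H := Cardinal.mk_image_le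
    exact absurd hcard (not_lt.2 (hle.trans h2))
  obtain ⟨h, hh⟩ := hbdd
  set h' : ℕ → ℕ := fun k => max (h k) (k + 1) with hh'
  set π : ℕ → ℕ := fun n => h'^[n] 0 with hπ
  have hπsucc : ∀ n, π (n+1) = h' (π n) := fun n => Function.iterate_succ_apply' h' n 0
  have hmono : StrictMono π := by
    apply strictMono_nat_of_lt_succ
    intro n
    rw [hπsucc]
    exact lt_of_lt_of_le (Nat.lt_succ_self _) (le_max_right _ _)
  refine ⟨π, hmono, rfl, ?_⟩
  intro b hb
  obtain ⟨N, hN⟩ := Filter.eventually_atTop.mp (hh b hb)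
  rw [Filter.eventually_atTop]
  refine ⟨N, fun n hn => ?_⟩
  have h1 : n ≤ π n := hmono.le_apply
  have h2 : g b (π n) ≤ π (n+1) := by
    rw [hπsucc]
    exact le_trans (hN (π n) (le_trans hn h1)) (le_max_left _ _)
  have h3 : f n ≤ F (π n) := Finset.le_sup (Finset.mem_range.2 (Nat.lt_succ_of_le h1))
  refine le_trans h3 (le_trans (hg b hb (π n)) (Set.ncard_le_ncard ?_ ?_))
  · exact Set.inter_subset_inter_right _ (Set.Ico_subset_Ico_right h2)
  · exact (Set.finite_Ico _ _).inter_of_right _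
end

section
/- Let π be a partition function with intervals I_π(n) and t, b ⊆ ℕ; write t(n) = t ∩ I_π(n), b(n) = b ∩ I_π(n). Let μ_t be the product over n of the measures ν_{I_π(n), t} on 𝒫(I_π(n)) (uniform measure on subsets of t(n)). If ∑ₙ 2^{−|t(n) ∩ b(n)|} < ∞ then the set of x with x(n) ∩ b(n) ≠ ∅ for all but finitely many n has μ_t-measure 1; otherwise this set has μ_t-measure 0. -/
open Set MeasureTheory Filter
open scoped ENNReal

noncomputable instance : MeasurableSpace (Set ℕ) := ⊤

/-- The `n`-th interval `I_π(n) = [π n, π (n+1))` of the partition function `π`. -/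
def Iblk (π : ℕ → ℕ) (n : ℕ) : Set ℕ := Set.Ico (π n) (π (n + 1))

/-- The factor probability `ν_{I_π(n), t}` : the uniform probability measure on
subsets of `t ∩ I_π(n)`, given by counting. -/
noncomputable def nuFun (t : Set ℕ) (π : ℕ → ℕ) (n : ℕ) (U : Set (Set ℕ)) : ℝ≥0∞ :=
  ({s : Set ℕ | s ⊆ t ∩ Iblk π n ∧ s ∈ U}.ncard : ℝ≥0∞) / 2 ^ (t ∩ Iblk π n).ncard

lemma ncard_setOf_subset (F : Set ℕ) (hF : F.Finite) :
    {s : Set ℕ | s ⊆ F}.ncard = 2 ^ F.ncard := by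
  classical
  obtain ⟨G, rfl⟩ := hF.exists_finset_coe
  have h : {s : Set ℕ | s ⊆ (G : Set ℕ)} =
      (fun (u : Finset ℕ) => (↑u : Set ℕ)) '' ↑G.powerset := by
    ext s
    simp only [mem_setOf_eq, mem_image, Finset.mem_coe, Finset.mem_powerset]
    constructor
    · intro hs
      refine ⟨G.filter (· ∈ s), Finset.filter_subset _ _, ?_⟩
      ext a
      simp only [Finset.coe_filter, mem_setOf_eq]
      exact ⟨fun h => h.2, fun h => ⟨hs h, h⟩⟩
    · rintro ⟨u, hu, rfl⟩
      exact Finset.coe_subset.2 hu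
  rw [h, Set.ncard_image_of_injective _ Finset.coe_injective, ncard_coe_finset,
    Finset.card_powerset, ncard_coe_finset]

lemma Iblk_finite (π : ℕ → ℕ) (n : ℕ) : (Iblk π n).Finite := Set.finite_Ico _ _

lemma nuFun_univ (t : Set ℕ) (π : ℕ → ℕ) (n : ℕ) : nuFun t π n univ = 1 := by
  have hF : (t ∩ Iblk π n).Finite := (Iblk_finite π n).inter_of_right _
  have h : {s : Set ℕ | s ⊆ t ∩ Iblk π n ∧ s ∈ univ} = {s | s ⊆ t ∩ Iblk π n} := by simp
  rw [nuFun, h, ncard_setOf_subset _ hF]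
  push_cast
  exact ENNReal.div_self (by positivity) (ENNReal.pow_ne_top (by norm_num))

lemma nuFun_event (t b : Set ℕ) (π : ℕ → ℕ) (n : ℕ) :
    nuFun t π n {s | s ∩ b ∩ Iblk π n = ∅} = 2⁻¹ ^ (t ∩ b ∩ Iblk π n).ncard := by
  have hF : (t ∩ Iblk π n).Finite := (Iblk_finite π n).inter_of_right _
  have hset : {s : Set ℕ | s ⊆ t ∩ Iblk π n ∧ s ∈ {s | s ∩ b ∩ Iblk π n = ∅}} =
      {s | s ⊆ (t ∩ Iblk π n) \ b} := by
    ext s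
    simp only [mem_setOf_eq]
    constructor
    · rintro ⟨hsub, hemp⟩ x hx
      refine ⟨hsub hx, fun hb => ?_⟩
      have : x ∈ s ∩ b ∩ Iblk π n := ⟨⟨hx, hb⟩, (hsub hx).2⟩
      simp [hemp] at this
    · intro hsub
      refine ⟨fun x hx => (hsub hx).1, ?_⟩
      ext x
      simp only [mem_inter_iff, mem_empty_iff_false, iff_false]
      rintro ⟨⟨hxs, hxb⟩, -⟩
      exact (hsub hxs).2 hxb
  have heq : t ∩ b ∩ Iblk π n = (t ∩ Iblk π n) ∩ b := by
    rw [inter_right_comm]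
  have hcard : ((t ∩ Iblk π n) ∩ b).ncard + ((t ∩ Iblk π n) \ b).ncard
      = (t ∩ Iblk π n).ncard := Set.ncard_inter_add_ncard_diff_eq_ncard _ _ hF
  rw [nuFun, hset, ncard_setOf_subset _ hF.diff, heq, ← hcard]
  push_cast
  set a := ((t ∩ Iblk π n) \ b).ncard
  set c := ((t ∩ Iblk π n) ∩ b).ncard
  rw [pow_add]
  symm
  rw [ENNReal.eq_div_iff (mul_ne_zero (pow_ne_zero _ two_ne_zero) (pow_ne_zero _ two_ne_zero)) (ENNReal.mul_ne_top (ENNReal.pow_ne_top (by norm_num)) (ENNReal.pow_ne_top (by norm_num)))]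
  calc (2:ℝ≥0∞) ^ c * 2 ^ a * 2⁻¹ ^ c = (2⁻¹ * 2) ^ c * 2 ^ a := by
        rw [mul_pow]; ring
    _ = 2 ^ a := by
        rw [ENNReal.inv_mul_cancel two_ne_zero ENNReal.ofNat_ne_top, one_pow, one_mul]

/-- Let `μ` be the product measure `μ_t = ∏ₙ ν_{I_π(n),t}` on `∏ₙ 𝒫(I_π(n)) ≅ 𝒫(ℕ)`
(characterized on cylinders). If `∑ₙ 2^{−|t(n) ∩ b(n)|} < ∞` then
`{x : x(n) ∩ b(n) ≠ ∅ for all but finitely many n}` has `μ_t`-measure 1;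
otherwise it has `μ_t`-measure 0. -/
theorem stmt7 (π : ℕ → ℕ) (hπ0 : π 0 = 0) (hπ : StrictMono π) (t b : Set ℕ)
    (μ : Measure (ℕ → Set ℕ)) [IsProbabilityMeasure μ]
    (hprod : ∀ (m : ℕ) (U : ℕ → Set (Set ℕ)),
      μ {x | ∀ k < m, x k ∈ U k} = ∏ k ∈ Finset.range m, nuFun t π k (U k)) :
    ((∑' n, (2 : ℝ≥0∞)⁻¹ ^ (t ∩ b ∩ Iblk π n).ncard) ≠ ⊤ →
      μ {x | ∀ᶠ n in atTop, (x n ∩ b ∩ Iblk π n).Nonempty} = 1) ∧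
    ((∑' n, (2 : ℝ≥0∞)⁻¹ ^ (t ∩ b ∩ Iblk π n).ncard) = ⊤ →
      μ {x | ∀ᶠ n in atTop, (x n ∩ b ∩ Iblk π n).Nonempty} = 0) := by
  classical
  set E : ℕ → Set (Set ℕ) := fun k => {s | s ∩ b ∩ Iblk π k = ∅} with hE
  set A : ℕ → Set (ℕ → Set ℕ) := fun k => {x | x k ∈ E k} with hA
  -- finite-intersection formula
  have hinter : ∀ S : Finset ℕ,
      μ (⋂ k ∈ S, A k) = ∏ k ∈ S, (2 : ℝ≥0∞)⁻¹ ^ (t ∩ b ∩ Iblk π k).ncard := by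
    intro S
    obtain ⟨m, hm⟩ := S.exists_nat_subset_range
    set U : ℕ → Set (Set ℕ) := fun k => if k ∈ S then E k else univ with hU
    have h1 : {x : ℕ → Set ℕ | ∀ k < m, x k ∈ U k} = ⋂ k ∈ S, A k := by
      ext x
      simp only [mem_setOf_eq, mem_iInter]
      constructor
      · intro h k hk
        have := h k (Finset.mem_range.1 (hm hk))
        simpa [hU, hk, hA] using this
      · intro h k _
        by_cases hkS : k ∈ S
        · simpa [hU, hkS, hA] using h k hkS
        · simp [hU, hkS]
    have h2 : ∏ k ∈ S, nuFun t π k (U k) = ∏ k ∈ Finset.range m, nuFun t π k (U k) :=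
      Finset.prod_subset hm (fun k _ hk => by simp [hU, hk, nuFun_univ])
    rw [← h1, hprod m U, ← h2]
    refine Finset.prod_congr rfl fun k hk => ?_
    simp only [hU, if_pos hk]
    exact nuFun_event t b π k
  have hone : ∀ k, μ (A k) = (2 : ℝ≥0∞)⁻¹ ^ (t ∩ b ∩ Iblk π k).ncard := by
    intro k
    have := hinter {k}
    simpa using this
  have hmeas : ∀ k, MeasurableSet (A k) := by
    intro k
    exact (measurable_pi_apply k) (MeasurableSpace.measurableSet_top)
  have hindep : ProbabilityTheory.iIndepSet A μ := by
    rw [ProbabilityTheory.iIndepSet_iff_meas_biInter hmeas]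
    intro S
    rw [hinter S]
    exact Finset.prod_congr rfl fun k _ => (hone k).symm
  have hEset : {x : ℕ → Set ℕ | ∀ᶠ n in atTop, (x n ∩ b ∩ Iblk π n).Nonempty}
      = (limsup A atTop)ᶜ := by
    ext x
    rw [mem_compl_iff, mem_limsup_iff_frequently_mem, not_frequently]
    simp only [hA, hE, mem_setOf_eq, Set.nonempty_iff_ne_empty]
  have hmeaslim : MeasurableSet (limsup A atTop) := MeasurableSet.measurableSet_limsup hmeas
  constructor
  · intro hsum
    have h0 : μ (limsup A atTop) = 0 := by
      apply measure_limsup_atTop_eq_zero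
      simpa only [hone] using hsum
    rw [hEset, measure_compl hmeaslim (measure_ne_top μ _), h0, measure_univ, tsub_zero]
  · intro hsum
    have h1 : μ (limsup A atTop) = 1 := by
      apply ProbabilityTheory.measure_limsup_eq_one hmeas hindep
      simpa only [hone] using hsum
    rw [hEset, measure_compl hmeaslim (measure_ne_top μ _), h1, measure_univ, tsub_self]
end

section
/- Loeb's lemma: Let 𝒰 be an ultrafilter on an index set I which is not countably complete, and let ℱ_𝒰 be the field of ultraproduct sets ∏ᵢ Aᵢ / 𝒰 (Aᵢ ∈ ℱᵢ for fields ℱᵢ of subsets of Xᵢ). Then no member of ℱ_𝒰 is the union of a countably infinite pairwise disjoint subfamily of ℱ_𝒰; more precisely, if A ∈ ℱ_𝒰 and A ⊆ ⋃ₙ Aₙ with each Aₙ ∈ ℱ_𝒰, then A ⊆ A₀ ∪ ⋯ ∪ Aₙ for some n. -/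
open Set

variable {I : Type*} {X : I → Type*}

/-- Equivalence modulo an ultrafilter: `x ≡ y` iff `{i : x i = y i} ∈ 𝒰`. -/
def uSetoid (𝒰 : Ultrafilter I) (X : I → Type*) : Setoid (∀ i, X i) where
  r x y := {i | x i = y i} ∈ 𝒰
  iseqv := by
    refine ⟨fun x => ?_, fun {x y} h => ?_, fun {x y z} hxy hyz => ?_⟩
    · exact Filter.univ_mem' fun i => rfl
    · exact Filter.mem_of_superset h fun i hi => hi.symm
    · exact Filter.mem_of_superset (Filter.inter_mem hxy hyz)
        fun i hi => hi.1.trans hi.2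

/-- The set ultraproduct `∏ᵢ Xᵢ / 𝒰`. -/
def uProd (𝒰 : Ultrafilter I) (X : I → Type*) := Quotient (uSetoid 𝒰 X)

/-- The ultraproduct set `[A] = ∏ᵢ Aᵢ / 𝒰` as a subset of the set ultraproduct. -/
def uSet (𝒰 : Ultrafilter I) (A : ∀ i, Set (X i)) : Set (uProd 𝒰 X) :=
  {q | ∃ x : ∀ i, X i, Quotient.mk (uSetoid 𝒰 X) x = q ∧ {i | x i ∈ A i} ∈ 𝒰}

/-- Loeb's lemma: if `𝒰` is not countably complete, then no ultraproduct set is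
the union of a countably infinite pairwise disjoint family of (nonempty)
ultraproduct sets; more precisely, if `[a] ⊆ ⋃ₙ [eₙ]` then `[a]` is covered by
finitely many `[eₙ]`. -/
theorem stmt10 (𝒰 : Ultrafilter I)
    (hcc : ∃ J : ℕ → Set I, (∀ n, J n ∈ 𝒰) ∧ (⋂ n, J n) ∉ 𝒰) :
    (∀ (a : ∀ i, Set (X i)) (e : ℕ → ∀ i, Set (X i)),
      (∀ m n, m ≠ n → Disjoint (uSet 𝒰 (e m)) (uSet 𝒰 (e n))) →
      (∀ n, (uSet 𝒰 (e n)).Nonempty) →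
      uSet 𝒰 a ≠ ⋃ n, uSet 𝒰 (e n)) ∧
    (∀ (a : ∀ i, Set (X i)) (e : ℕ → ∀ i, Set (X i)),
      uSet 𝒰 a ⊆ ⋃ n, uSet 𝒰 (e n) →
      ∃ N : ℕ, uSet 𝒰 a ⊆ ⋃ n ≤ N, uSet 𝒰 (e n)) := by
  obtain ⟨J, hJmem, hJnot⟩ := hcc
  have key : ∀ (a : ∀ i, Set (X i)) (e : ℕ → ∀ i, Set (X i)),
      uSet 𝒰 a ⊆ ⋃ n, uSet 𝒰 (e n) →
      ∃ N : ℕ, uSet 𝒰 a ⊆ ⋃ n ≤ N, uSet 𝒰 (e n) := by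
    intro a e hsub
    by_contra hN
    push_neg at hN
    have hx : ∀ N : ℕ, ∃ x : ∀ i, X i,
        {i | x i ∈ a i} ∈ 𝒰 ∧ ∀ m ≤ N, {i | x i ∈ e m i} ∉ 𝒰 := by
      intro N
      obtain ⟨q, hqa, hqn⟩ := Set.not_subset.mp (hN N)
      obtain ⟨x, hxq, hxa⟩ := hqa
      refine ⟨x, hxa, fun m hm hmem => hqn ?_⟩
      exact Set.mem_biUnion hm ⟨x, hxq, hmem⟩
    choose x hxa hxe using hx
    set L : ℕ → Set I := fun n =>
      ((⋂ m ∈ Set.Iic n, J m) ∩ {i | x n i ∈ a i}) ∩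
        ⋂ m ∈ Set.Iic n, {i | x n i ∈ e m i}ᶜ with hLdef
    have hL : ∀ n, L n ∈ 𝒰 := by
      intro n
      refine Filter.inter_mem (Filter.inter_mem ?_ (hxa n)) ?_
      · exact (Filter.biInter_mem (Set.finite_Iic n)).mpr fun m _ => hJmem m
      · exact (Filter.biInter_mem (Set.finite_Iic n)).mpr fun m hm =>
          (Ultrafilter.compl_mem_iff_notMem).mpr (hxe n m hm)
    set M : ℕ → Set I := fun n => ⋂ k ∈ Set.Iic n, L k with hMdef
    have hM : ∀ n, M n ∈ 𝒰 := fun n =>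
      (Filter.biInter_mem (Set.finite_Iic n)).mpr fun k _ => hL k
    have hMmono : ∀ {m n : ℕ}, m ≤ n → M n ⊆ M m := by
      intro m n hmn i hi
      simp only [hMdef, Set.mem_iInter] at hi ⊢
      exact fun k hk => hi k (le_trans hk hmn)
    have hML : ∀ n, M n ⊆ L n := by
      intro n i hi
      simp only [hMdef, Set.mem_iInter] at hi
      exact hi n (Set.mem_Iic.mpr le_rfl)
    have hMint : (⋂ n, M n) ∉ 𝒰 := by
      intro h
      refine hJnot (Filter.mem_of_superset h ?_)
      intro i hi
      simp only [Set.mem_iInter] at hi ⊢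
      intro n
      have := hML n (hi n)
      simp only [hLdef, Set.mem_inter_iff, Set.mem_iInter] at this
      exact this.1.1 n (Set.mem_Iic.mpr le_rfl)
    have hD : (M 0 ∩ (⋂ n, M n)ᶜ) ∈ 𝒰 :=
      Filter.inter_mem (hM 0) ((Ultrafilter.compl_mem_iff_notMem).mpr hMint)
    -- the last level containing i
    have hex : ∀ i ∈ M 0 ∩ (⋂ n, M n)ᶜ, ∃ k, i ∉ M (k + 1) := by
      intro i hi
      obtain ⟨k, hk⟩ : ∃ k, i ∉ M k := by
        by_contra h
        push_neg at h
        exact hi.2 (Set.mem_iInter.mpr h)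
      cases k with
      | zero => exact absurd hi.1 hk
      | succ k => exact ⟨k, hk⟩
    classical
    set nf : I → ℕ := fun i =>
      if h : ∃ k, i ∉ M (k + 1) then Nat.find h else 0 with hnfdef
    set y : ∀ i, X i := fun i => x (nf i) i with hydef
    have hnfmem : ∀ i ∈ M 0 ∩ (⋂ n, M n)ᶜ, i ∈ M (nf i) := by
      intro i hi
      have h := hex i hi
      simp only [hnfdef, dif_pos h]
      rcases Nat.eq_zero_or_eq_succ_pred (Nat.find h) with h0 | h1
      · rw [h0]; exact hi.1
      · rw [h1]
        by_contra hc
        exact absurd (Nat.find_min h (Nat.pred_lt (h1 ▸ Nat.succ_ne_zero _)) :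
          ¬ i ∉ M (Nat.find h - 1 + 1)) (by simpa using hc)
    have hnfge : ∀ i ∈ M 0 ∩ (⋂ n, M n)ᶜ, ∀ m, i ∈ M m → m ≤ nf i := by
      intro i hi m him
      have h := hex i hi
      simp only [hnfdef, dif_pos h]
      by_contra hc
      push_neg at hc
      exact Nat.find_spec h (hMmono hc him)
    have hya : {i | y i ∈ a i} ∈ 𝒰 := by
      refine Filter.mem_of_superset hD fun i hi => ?_
      have := hML (nf i) (hnfmem i hi)
      simp only [hLdef, Set.mem_inter_iff] at this
      exact this.1.2
    have hyq : Quotient.mk (uSetoid 𝒰 X) y ∈ uSet 𝒰 a := ⟨y, rfl, hya⟩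
    obtain ⟨m, hm⟩ := Set.mem_iUnion.mp (hsub hyq)
    obtain ⟨y', hy'q, hy'e⟩ := hm
    have hyy' : {i | y' i = y i} ∈ 𝒰 := Quotient.exact hy'q
    have hye : {i | y i ∈ e m i} ∈ 𝒰 := by
      refine Filter.mem_of_superset (Filter.inter_mem hy'e hyy') fun i hi => ?_
      show y i ∈ e m i
      rw [← hi.2]; exact hi.1
    have hE : ((M 0 ∩ (⋂ n, M n)ᶜ) ∩ M m ∩ {i | y i ∈ e m i}) ∈ 𝒰 :=
      Filter.inter_mem (Filter.inter_mem hD (hM m)) hye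
    obtain ⟨i, hi⟩ := Ultrafilter.nonempty_of_mem hE
    have hmle : m ≤ nf i := hnfge i hi.1.1 m hi.1.2
    have hnot : y i ∉ e m i := by
      have := hML (nf i) (hnfmem i hi.1.1)
      simp only [hLdef, Set.mem_inter_iff, Set.mem_iInter] at this
      exact this.2 m hmle
    exact hnot hi.2
  refine ⟨?_, key⟩
  intro a e hdisj hne heq
  obtain ⟨N, hNsub⟩ := key a e (heq ▸ Set.Subset.rfl)
  obtain ⟨q, hq⟩ := hne (N + 1)
  have hqa : q ∈ uSet 𝒰 a := heq ▸ Set.mem_iUnion.mpr ⟨N + 1, hq⟩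
  obtain ⟨n, hn, hqn⟩ := Set.mem_iUnion₂.mp (hNsub hqa)
  exact Set.disjoint_left.mp (hdisj n (N + 1) (by omega)) hqn hq
end

section
/- Let 𝒱 be a σ-complete ultrafilter on I over M, and suppose (ℳᵢ, Xᵢ : i ∈ I) ∈ M is a sequence of σ-algebras ℳᵢ of subsets of Xᵢ. If ([Eₙ] : n ∈ ℕ) ∈ M is a sequence of members of ℳ_𝒱^M, then ⋃ₙ [Eₙ] = [E] where E(i) = ⋃ₙ Eₙ(i). Consequently ℳ_𝒱^M is a σ-algebra over M of subsets of ∏ᵢ Xᵢ/𝒱. -/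
open Set Filter

/-- Let `𝒱` be a filter on `I` which is an ultrafilter over a model `M` and
σ-complete over `M` (subsets of `I` in `M` recorded by `MS`, sequences in `M` by
`Mω`, functions in `M` by `Mfun`), and let `(Eₙ)` be a sequence in `M` of members
of the field `ℳ_𝒱^M`.  Then `⋃ₙ [Eₙ] = [E]` where `E(i) = ⋃ₙ Eₙ(i)`: for every
representative `x` in `M`, `[x] ∈ [E]` iff `[x] ∈ [Eₙ]` for some `n`.
Consequently `ℳ_𝒱^M` is a σ-algebra over `M`. -/
theorem stmt13 {I : Type*} {X : I → Type*} (V : Filter I) [V.NeBot]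
    (MS : Set (Set I)) (Mω : Set (ℕ → Set I))
    (hultra : ∀ Y ∈ MS, Y ∈ V ∨ Yᶜ ∈ V)
    (hsigma : ∀ J ∈ Mω, (∀ n, J n ∈ V) → (⋂ n, J n) ∈ V)
    (hcompl : ∀ J ∈ Mω, (fun n => (J n)ᶜ) ∈ Mω)
    (Mfun : Set (∀ i, X i))
    (E : ℕ → ∀ i, Set (X i))
    (hclosure : ∀ x ∈ Mfun,
      ((fun n => {i | x i ∈ E n i}) ∈ Mω) ∧ ∀ n, {i | x i ∈ E n i} ∈ MS) :
    ∀ x ∈ Mfun, ({i | x i ∈ ⋃ n, E n i} ∈ V ↔ ∃ n, {i | x i ∈ E n i} ∈ V) := by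
  intro x hx
  obtain ⟨hMω, hMS⟩ := hclosure x hx
  constructor
  · intro hU
    by_contra h
    push_neg at h
    have hc : ∀ n, {i | x i ∈ E n i}ᶜ ∈ V := fun n =>
      (hultra _ (hMS n)).resolve_left (h n)
    have hI : (⋂ n, {i | x i ∈ E n i}ᶜ) ∈ V := hsigma _ (hcompl _ hMω) hc
    have : (∅ : Set I) ∈ V := by
      have := Filter.inter_mem hU hI
      convert this using 1
      ext i
      simp [Set.mem_iInter, mem_iUnion]
    exact absurd (Filter.empty_mem_iff_bot.mp this) (Filter.NeBot.ne ‹_›)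
  · rintro ⟨n, hn⟩
    exact Filter.mem_of_superset hn fun i hi => Set.mem_iUnion.mpr ⟨n, hi⟩
end

section
/- Let τ be a filtered order-type of cardinality |τ| < 𝔡* and λ < 𝔭 a limit ordinal. Then there is no universal (τ, λ*)-gap for ultrapowers of ℕ^ℕ: for any A, B ⊆ ℕ^ℕ with (A,B) a <*-pregap of type (τ, λ*), there exists h ∈ ℕ^ℕ and a nonprincipal ultrafilter 𝒰 on ℕ such that f <_𝒰 h <_𝒰 g for all f ∈ A, g ∈ B. -/
open Set

/-- `a ⊆* b` : almost containment of subsets of ℕ. -/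
def ASub (a b : Set ℕ) : Prop := (a \ b).Finite

/-- `f <* g` : eventual strict domination. -/
def EvLT (f g : ℕ → ℕ) : Prop := ∀ᶠ n in Filter.atTop, f n < g n

/-- A filter-base of infinite subsets of ℕ. -/
def IsFilterBase (F : Set (Set ℕ)) : Prop :=
  (∀ a ∈ F, a.Infinite) ∧ ∀ G : Finset (Set ℕ), ↑G ⊆ F → (⋂ a ∈ G, a).Infinite

/-- `F` has an infinite pseudo-intersection. -/
def HasPseudoInter (F : Set (Set ℕ)) : Prop :=
  ∃ x : Set ℕ, x.Infinite ∧ ∀ a ∈ F, ASub x a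

/-- The pseudo-intersection number 𝔭. -/
noncomputable def pNum : Cardinal :=
  sInf {c | ∃ F : Set (Set ℕ), IsFilterBase F ∧ ¬ HasPseudoInter F ∧ c = Cardinal.mk F}

/-- The cardinal 𝔡*: the least cardinality of a family `H` of infinite subsets
of ℕ admitting a filter-base of size < 𝔭 of sets each meeting every member of `H`
in an infinite set, but with no pseudo-intersection with this property. -/
noncomputable def dStar : Cardinal :=
  sInf {c | ∃ H : Set (Set ℕ), (∀ h ∈ H, h.Infinite) ∧
    (∃ F : Set (Set ℕ), IsFilterBase F ∧ Cardinal.mk F < pNum ∧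
      (∀ a ∈ F, ∀ h ∈ H, (a ∩ h).Infinite) ∧
      ¬ ∃ x : Set ℕ, (∀ a ∈ F, ASub x a) ∧ ∀ h ∈ H, (x ∩ h).Infinite) ∧
    c = Cardinal.mk H}

private lemma ev_finite {p : ℕ → Prop} (h : ∀ᶠ n in Filter.atTop, p n) : {n | ¬ p n}.Finite := by
  rw [← Nat.cofinite_eq_atTop] at h
  exact Filter.eventually_cofinite.mp h

private lemma ev_infinite {p : ℕ → Prop} (h : ∀ᶠ n in Filter.atTop, p n) : {n | p n}.Infinite := by
  have h2 := (ev_finite h).infinite_compl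
  have h3 : {n | ¬ p n}ᶜ = {n | p n} := by ext n; simp
  rwa [h3] at h2

private lemma inf_image {S : Set ℕ} (hS : S.Infinite) (g : ℕ → ℕ) (T : Set ℕ)
    (hT : ∀ n ∈ S, Nat.pair n (g n) ∈ T) : T.Infinite := by
  have := hS.to_subtype
  exact Set.infinite_of_injective_forall_mem
    (f := fun n : S => Nat.pair n.1 (g n.1))
    (fun a c hac => Subtype.ext (Nat.pair_eq_pair.mp hac).1)
    (fun a => hT a.1 a.2)

private lemma fst_image_infinite {s : Set ℕ}
    (hcol : ∀ n, {m | Nat.pair n m ∈ s}.Finite) (hs : s.Infinite) :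
    ((fun k => (Nat.unpair k).1) '' s).Infinite := by
  intro hfin
  apply hs
  have hsub : s ⊆ ⋃ n ∈ (fun k => (Nat.unpair k).1) '' s,
      (fun m => Nat.pair n m) '' {m | Nat.pair n m ∈ s} := by
    intro k hk
    refine Set.mem_biUnion (Set.mem_image_of_mem _ hk) ?_
    exact ⟨(Nat.unpair k).2, by simpa [Nat.pair_unpair] using hk, Nat.pair_unpair k⟩
  exact ((hfin.biUnion (fun n _ => ((hcol n).image _))).subset hsub)

private lemma mem_generate_prop {α : Type*} {S : Set (Set α)} (Q : Set α → Prop)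
    (hmono : ∀ u v, u ⊆ v → Q u → Q v) (huniv : Q Set.univ)
    (hS : ∀ u ∈ S, Q u)
    (hinter : ∀ u v, Q u → Q v → Q (u ∩ v)) :
    ∀ s ∈ Filter.generate S, Q s := by
  intro s hs
  obtain ⟨t, htS, htfin, hts⟩ := Filter.mem_generate_iff.mp hs
  refine hmono _ _ hts ?_
  have key : ∀ t : Set (Set α), t.Finite → t ⊆ S → Q (⋂₀ t) := by
    intro t htf
    refine Set.Finite.induction_on (motive := fun t _ => t ⊆ S → Q (⋂₀ t)) t htf
      (fun _ => by rw [Set.sInter_empty]; exact huniv) ?_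
    intro a u _ _ ih hins
    rw [Set.insert_subset_iff] at hins
    rw [Set.sInter_insert]
    exact hinter _ _ (hS a hins.1) (ih hins.2)
  exact key t htfin htS

/-- region strictly below `b o`, coded into ℕ by `Nat.pair`. -/
private def aset (lam : Ordinal) (b : ∀ o : Ordinal, o < lam → ℕ → ℕ)
    (o : Ordinal) (ho : o < lam) : Set ℕ :=
  {k | (Nat.unpair k).2 < b o ho (Nat.unpair k).1}

/-- region strictly above `f`, coded into ℕ by `Nat.pair`. -/
private def hset (f : ℕ → ℕ) : Set ℕ := {k | f (Nat.unpair k).1 < (Nat.unpair k).2}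

private def Fam (lam : Ordinal) (b : ∀ o : Ordinal, o < lam → ℕ → ℕ) : Set (Set ℕ) :=
  {a | ∃ o, ∃ ho : o < lam, a = aset lam b o ho}

private lemma Fam_card (lam : Ordinal) (b : ∀ o : Ordinal, o < lam → ℕ → ℕ)
    (hlam : lam.card < pNum) : Cardinal.mk (Fam lam b) < pNum := by
  have hFeq : Fam lam b = Set.range (fun i : lam.ToType =>
      aset lam b ((Ordinal.ToType.mk (o := lam)).symm i).1 ((Ordinal.ToType.mk (o := lam)).symm i).2) := by
    ext a
    constructor
    · rintro ⟨o, ho, rfl⟩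
      refine ⟨Ordinal.ToType.mk (o := lam) ⟨o, ho⟩, ?_⟩
      beta_reduce
      rw [show (Ordinal.ToType.mk (o := lam)).symm (Ordinal.ToType.mk (o := lam) ⟨o, ho⟩) = ⟨o, ho⟩ from
        OrderIso.symm_apply_apply _ _]
    · rintro ⟨i, rfl⟩
      exact ⟨_, _, rfl⟩
  rw [hFeq]
  refine lt_of_le_of_lt Cardinal.mk_range_le ?_
  rwa [Cardinal.mk_toType]

/-- For `τ` a filtered order-type of cardinality < 𝔡* (here: a ≤*-directed family
`A` with `|A| < 𝔡*`) and `λ < 𝔭` a limit ordinal, there is no universal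
`(τ, λ*)`-gap for ultrapowers of ℕ^ℕ: any such pregap `(A, B)` is interpolated in
`ℕ^ℕ/𝒰` for some nonprincipal ultrafilter `𝒰`. -/
theorem stmt18 (A : Set (ℕ → ℕ)) (hA : Cardinal.mk A < dStar)
    (hfiltered : ∀ f ∈ A, ∀ g ∈ A, ∃ k ∈ A, EvLE f k ∧ EvLE g k)
    (lam : Ordinal) (hlim : Order.IsSuccLimit lam) (hlam : lam.card < pNum)
    (b : ∀ o : Ordinal, o < lam → ℕ → ℕ)
    (hb : ∀ o o' (ho : o < lam) (ho' : o' < lam), o < o' → EvLT (b o' ho') (b o ho))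
    (hgap : ∀ f ∈ A, ∀ o (ho : o < lam), EvLT f (b o ho)) :
    ∃ (h : ℕ → ℕ) (𝒰 : Ultrafilter ℕ), (∀ n : ℕ, {n} ∉ 𝒰) ∧
      (∀ f ∈ A, {n | f n < h n} ∈ 𝒰) ∧
      (∀ o (ho : o < lam), {n | h n < b o ho n} ∈ 𝒰) := by
  have hpos : ∀ (o : Ordinal) (ho : o < lam), ∀ᶠ n in Filter.atTop, 0 < b o ho n := by
    intro o ho
    have ho1 : o + 1 < lam := by rw [Ordinal.add_one_eq_succ]; exact hlim.succ_lt ho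
    have hlt : o < o + 1 := by rw [Ordinal.add_one_eq_succ]; exact Order.lt_succ o
    have hev : ∀ᶠ n in Filter.atTop, b (o + 1) ho1 n < b o ho n := hb o (o + 1) ho ho1 hlt
    exact hev.mono fun n hn => lt_of_le_of_lt (Nat.zero_le _) hn
  rcases A.eq_empty_or_nonempty with hAe | ⟨f0, hf0⟩
  · subst hAe
    refine ⟨fun _ => 0, Ultrafilter.of Filter.cofinite, ?_, ?_, ?_⟩
    · intro n
      have hmem : ({n} : Set ℕ)ᶜ ∈ Ultrafilter.of Filter.cofinite :=
        Filter.le_def.mp (Ultrafilter.of_le _) _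
          (by rw [Filter.mem_cofinite, compl_compl]; exact Set.finite_singleton n)
      exact Ultrafilter.compl_mem_iff_notMem.mp hmem
    · intro f hf
      exact absurd hf (Set.notMem_empty f)
    · intro o ho
      refine Filter.le_def.mp (Ultrafilter.of_le _) _ ?_
      rw [Filter.mem_cofinite]
      have := ev_finite (hpos o ho)
      have hc : {n : ℕ | (fun _ => 0) n < b o ho n}ᶜ = {n | ¬ 0 < b o ho n} := by
        ext n; simp
      rwa [hc]
  -- Main case : A nonempty
  -- extract the pseudo-intersection x from the definition of 𝔡*
  have hHinf : ∀ h' ∈ hset '' A, h'.Infinite := by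
    rintro _ ⟨f, hf, rfl⟩
    refine inf_image Set.infinite_univ (fun n => f n + 1) _ ?_
    intro n _
    simp only [hset, Set.mem_setOf_eq, Nat.unpair_pair]
    exact Nat.lt_succ_self _
  have hFB : IsFilterBase (Fam lam b) := by
    constructor
    · rintro a ⟨o, ho, rfl⟩
      refine inf_image (ev_infinite (hpos o ho)) (fun _ => 0) _ ?_
      intro n hn
      simp only [aset, Set.mem_setOf_eq, Nat.unpair_pair]
      exact hn
    · intro G hG
      have hev : ∀ᶠ n in Filter.atTop, ∀ a ∈ G, Nat.pair n 0 ∈ a := by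
        rw [Filter.eventually_all_finset]
        intro a ha
        obtain ⟨o, ho, rfl⟩ := hG (Finset.mem_coe.mpr ha)
        refine (hpos o ho).mono fun n hn => ?_
        simp only [aset, Set.mem_setOf_eq, Nat.unpair_pair]
        exact hn
      refine inf_image (ev_infinite hev) (fun _ => 0) _ ?_
      intro n hn
      exact Set.mem_iInter₂.mpr hn
  have hmeets : ∀ a ∈ Fam lam b, ∀ h' ∈ hset '' A, (a ∩ h').Infinite := by
    rintro a ⟨o, ho, rfl⟩ _ ⟨f, hf, rfl⟩
    have ho1 : o + 1 < lam := by rw [Ordinal.add_one_eq_succ]; exact hlim.succ_lt ho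
    have hlt : o < o + 1 := by rw [Ordinal.add_one_eq_succ]; exact Order.lt_succ o
    have hev : ∀ᶠ n in Filter.atTop, f n < b (o + 1) ho1 n ∧ b (o + 1) ho1 n < b o ho n :=
      Filter.Eventually.and (hgap f hf (o + 1) ho1) (hb o (o + 1) ho ho1 hlt)
    refine inf_image (ev_infinite hev) (fun n => b (o + 1) ho1 n) _ ?_
    intro n hn
    constructor
    · simp only [aset, Set.mem_setOf_eq, Nat.unpair_pair]
      exact hn.2
    · simp only [hset, Set.mem_setOf_eq, Nat.unpair_pair]
      exact hn.1
  have hEx : ∃ x : Set ℕ, (∀ a ∈ Fam lam b, ASub x a) ∧ ∀ h' ∈ hset '' A, (x ∩ h').Infinite := by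
    by_contra hno
    have hle : dStar ≤ Cardinal.mk (hset '' A) := by
      unfold dStar
      exact csInf_le' ⟨hset '' A, hHinf, ⟨Fam lam b, hFB, Fam_card lam b hlam, hmeets, hno⟩, rfl⟩
    exact absurd ((hle.trans Cardinal.mk_image_le).trans_lt hA) (lt_irrefl _)
  obtain ⟨x, hx1, hx2⟩ := hEx
  have hbad : ∀ (o : Ordinal) (ho : o < lam), (x \ aset lam b o ho).Finite :=
    fun o ho => hx1 _ ⟨o, ho, rfl⟩
  have hcolfin : ∀ n, {m | Nat.pair n m ∈ x}.Finite := by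
    intro n
    have hsub : {m | Nat.pair n m ∈ x} ⊆ {m | m < b 0 hlim.pos n} ∪
        (fun m => Nat.pair n m) ⁻¹' (x \ aset lam b 0 hlim.pos) := by
      intro m hm
      by_cases hc : Nat.pair n m ∈ aset lam b 0 hlim.pos
      · left
        simpa only [aset, Set.mem_setOf_eq, Nat.unpair_pair] using hc
      · right
        exact ⟨hm, hc⟩
    refine (((Set.finite_lt_nat _).union ((hbad 0 hlim.pos).preimage ?_)).subset hsub)
    exact Function.Injective.injOn (fun a c hac => (Nat.pair_eq_pair.mp hac).2)
  set hh : ℕ → ℕ := fun n => sSup {m | Nat.pair n m ∈ x} with hh_def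
  have Einf : ∀ f ∈ A, {n | f n < hh n}.Infinite := by
    intro f hf
    have hxf : (x ∩ hset f).Infinite := hx2 _ ⟨f, hf, rfl⟩
    have himg := fst_image_infinite (s := x ∩ hset f)
      (fun n => (hcolfin n).subset (fun m hm => hm.1)) hxf
    refine himg.mono ?_
    rintro _ ⟨k, hk, rfl⟩
    simp only [Set.mem_setOf_eq]
    have hmem : (Nat.unpair k).2 ∈ {m | Nat.pair (Nat.unpair k).1 m ∈ x} := by
      simp only [Set.mem_setOf_eq, Nat.pair_unpair]
      exact hk.1
    have hle := le_csSup ((hcolfin (Nat.unpair k).1).bddAbove) hmem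
    exact lt_of_lt_of_le hk.2 hle
  have colmem : ∀ n (f : ℕ → ℕ), f n < hh n → Nat.pair n (hh n) ∈ x := by
    intro n f hlt
    rcases Set.eq_empty_or_nonempty {m | Nat.pair n m ∈ x} with he | hne
    · exfalso
      rw [hh_def] at hlt
      simp only [he, csSup_empty, Nat.bot_eq_zero] at hlt
      exact absurd hlt (Nat.not_lt_zero _)
    · exact Nat.sSup_mem hne ((hcolfin n).bddAbove)
  have EGinf : ∀ f ∈ A, ∀ (o : Ordinal) (ho : o < lam),
      ({n | f n < hh n} ∩ {n | hh n < b o ho n}).Infinite := by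
    intro f hf o ho
    have hN : ((fun k => (Nat.unpair k).1) '' (x \ aset lam b o ho)).Finite := (hbad o ho).image _
    refine ((Einf f hf).diff hN).mono ?_
    rintro n ⟨hn1, hn2⟩
    refine ⟨hn1, ?_⟩
    simp only [Set.mem_setOf_eq] at hn1 ⊢
    have hpx : Nat.pair n (hh n) ∈ x := colmem n f hn1
    by_cases hc : Nat.pair n (hh n) ∈ aset lam b o ho
    · simpa only [aset, Set.mem_setOf_eq, Nat.unpair_pair] using hc
    · exact absurd ⟨Nat.pair n (hh n), ⟨hpx, hc⟩, by simp [Nat.unpair_pair]⟩ hn2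
  have Esub : ∀ f f' : ℕ → ℕ, EvLE f f' →
      ({n | f' n < hh n} \ {n | f n < hh n}).Finite := by
    intro f f' hle
    have hle' : ∀ᶠ n in Filter.atTop, f n ≤ f' n := hle
    refine (ev_finite hle').subset ?_
    rintro n ⟨h1, h2⟩
    simp only [Set.mem_setOf_eq] at h1 h2 ⊢
    exact fun hle'' => h2 (lt_of_le_of_lt hle'' h1)
  have Gsub : ∀ (o o' : Ordinal) (ho : o < lam) (ho' : o' < lam), o ≤ o' →
      ({n | hh n < b o' ho' n} \ {n | hh n < b o ho n}).Finite := by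
    intro o o' ho ho' hle
    rcases eq_or_lt_of_le hle with rfl | hlt
    · have heq : ({n | hh n < b o ho' n} : Set ℕ) = {n | hh n < b o ho n} := rfl
      rw [heq, Set.diff_self]
      exact Set.finite_empty
    · have hev : ∀ᶠ n in Filter.atTop, b o' ho' n < b o ho n := hb o o' ho ho' hlt
      refine (ev_finite hev).subset ?_
      rintro n ⟨h1, h2⟩
      simp only [Set.mem_setOf_eq] at h1 h2 ⊢
      exact fun hlt' => h2 (lt_trans h1 hlt')
  set SS : Set (Set ℕ) := {s | ∃ f ∈ A, s = {n | f n < hh n}} ∪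
      {s | ∃ o, ∃ ho : o < lam, s = {n | hh n < b o ho n}} with SS_def
  set Q : Set ℕ → Prop := fun u => ∃ f ∈ A, ∃ o, ∃ ho : o < lam,
      (({n | f n < hh n} ∩ {n | hh n < b o ho n}) \ u).Finite with Q_def
  have Qmono : ∀ u v : Set ℕ, u ⊆ v → Q u → Q v := by
    rintro u v huv ⟨f, hf, o, ho, hfin⟩
    exact ⟨f, hf, o, ho, hfin.subset (Set.diff_subset_diff_right huv)⟩
  have Quniv : Q Set.univ := ⟨f0, hf0, 0, hlim.pos, by simp⟩
  have QS : ∀ u ∈ SS, Q u := by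
    rintro u (⟨f, hf, rfl⟩ | ⟨o, ho, rfl⟩)
    · refine ⟨f, hf, 0, hlim.pos, Set.finite_empty.subset ?_⟩
      rintro n ⟨⟨h1, _⟩, h3⟩
      exact absurd h1 h3
    · refine ⟨f0, hf0, o, ho, Set.finite_empty.subset ?_⟩
      rintro n ⟨⟨_, h2⟩, h3⟩
      exact absurd h2 h3
  have Qinter : ∀ u v : Set ℕ, Q u → Q v → Q (u ∩ v) := by
    rintro u v ⟨f, hf, o, ho, hu⟩ ⟨f', hf', o', ho', hv⟩
    obtain ⟨f'', hf'', h1, h2⟩ := hfiltered f hf f' hf'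
    have ho'' : max o o' < lam := max_lt ho ho'
    refine ⟨f'', hf'', max o o', ho'', ?_⟩
    have key : ∀ (g : ℕ → ℕ) (p : Ordinal) (hp : p < lam) (w : Set ℕ),
        EvLE g f'' → p ≤ max o o' →
        (({n | g n < hh n} ∩ {n | hh n < b p hp n}) \ w).Finite →
        (({n | f'' n < hh n} ∩ {n | hh n < b (max o o') ho'' n}) \ w).Finite := by
      intro g p hp w hgle hple hw
      have hsub : ({n | f'' n < hh n} ∩ {n | hh n < b (max o o') ho'' n}) \ w ⊆
          (({n | f'' n < hh n} \ {n | g n < hh n}) ∪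
           ({n | hh n < b (max o o') ho'' n} \ {n | hh n < b p hp n})) ∪
          (({n | g n < hh n} ∩ {n | hh n < b p hp n}) \ w) := by
        rintro n ⟨⟨hn1, hn2⟩, hn3⟩
        by_cases hg1 : n ∈ {n | g n < hh n}
        · by_cases hg2 : n ∈ {n | hh n < b p hp n}
          · exact Or.inr ⟨⟨hg1, hg2⟩, hn3⟩
          · exact Or.inl (Or.inr ⟨hn2, hg2⟩)
        · exact Or.inl (Or.inl ⟨hn1, hg1⟩)
      exact (((Esub g f'' hgle).union (Gsub p (max o o') hp ho'' hple)).union hw).subset hsub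
    have hXu := key f o ho u h1 (le_max_left o o') hu
    have hXv := key f' o' ho' v h2 (le_max_right o o') hv
    have hsub2 : (({n | f'' n < hh n} ∩ {n | hh n < b (max o o') ho'' n}) \ (u ∩ v)) ⊆
        (({n | f'' n < hh n} ∩ {n | hh n < b (max o o') ho'' n}) \ u) ∪
        (({n | f'' n < hh n} ∩ {n | hh n < b (max o o') ho'' n}) \ v) := by
      rintro n ⟨hn1, hn2⟩
      rw [Set.mem_inter_iff, not_and_or] at hn2
      rcases hn2 with h | h
      · exact Or.inl ⟨hn1, h⟩
      · exact Or.inr ⟨hn1, h⟩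
    exact (hXu.union hXv).subset hsub2
  have Qgen : ∀ s ∈ Filter.generate SS, Q s := mem_generate_prop Q Qmono Quniv QS Qinter
  have Linf : ∀ u ∈ Filter.generate SS ⊓ Filter.cofinite, u.Infinite := by
    intro u hu
    obtain ⟨s, hs, c, hc, rfl⟩ := Filter.mem_inf_iff.mp hu
    obtain ⟨f, hf, o, ho, hfin⟩ := Qgen s hs
    have hcc : cᶜ.Finite := Filter.mem_cofinite.mp hc
    have hsub : ({n | f n < hh n} ∩ {n | hh n < b o ho n}) \
        ((({n | f n < hh n} ∩ {n | hh n < b o ho n}) \ s) ∪ cᶜ) ⊆ s ∩ c := by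
      rintro n ⟨hn1, hn2⟩
      rw [Set.mem_union] at hn2
      push_neg at hn2
      constructor
      · by_contra hns
        exact hn2.1 ⟨hn1, hns⟩
      · by_contra hnc
        exact hn2.2 hnc
    exact ((EGinf f hf o ho).diff (hfin.union hcc)).mono hsub
  have hNB : Filter.NeBot (Filter.generate SS ⊓ Filter.cofinite) := by
    rw [Filter.neBot_iff]
    intro hbot
    have hmem : (∅ : Set ℕ) ∈ Filter.generate SS ⊓ Filter.cofinite := by
      rw [hbot]; exact Filter.mem_bot
    exact (Linf ∅ hmem) Set.finite_empty
  refine ⟨hh, Ultrafilter.of (Filter.generate SS ⊓ Filter.cofinite), ?_, ?_, ?_⟩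
  · intro n
    have hmem : ({n} : Set ℕ)ᶜ ∈ Ultrafilter.of (Filter.generate SS ⊓ Filter.cofinite) :=
      Filter.le_def.mp (Ultrafilter.of_le _) _ (Filter.mem_inf_of_right (by
        rw [Filter.mem_cofinite, compl_compl]; exact Set.finite_singleton n))
    exact Ultrafilter.compl_mem_iff_notMem.mp hmem
  · intro f hf
    refine Filter.le_def.mp (Ultrafilter.of_le _) _ (Filter.mem_inf_of_left
      (Filter.mem_generate_of_mem ?_))
    rw [SS_def]
    exact Set.mem_union_left _ ⟨f, hf, rfl⟩
  · intro o ho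
    refine Filter.le_def.mp (Ultrafilter.of_le _) _ (Filter.mem_inf_of_left
      (Filter.mem_generate_of_mem ?_))
    rw [SS_def]
    exact Set.mem_union_right _ ⟨o, ho, rfl⟩
end

section
/- If 𝔭 < 𝔡*, then every filter-base of cardinality 𝔭 of infinite subsets of ℕ can be refined to a tower: there is a ⊇*-well-ordered family (t_α)_{α<𝔭} with each t_α ⊆ x_α and t_α ∩ x_ξ infinite for all ξ < 𝔭, where (x_α)_{α<𝔭} enumerates the filter-base. -/
open Set

namespace Stmt19Aux

/-- Invariant: `s` has infinite intersection with every finite intersection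
of the given family below `pNum.ord`. -/
def Good (x' : Ordinal → Set ℕ) (s : Set ℕ) : Prop :=
  ∀ S : Finset Ordinal, (∀ ξ ∈ S, ξ < pNum.ord) → (s ∩ ⋂ ξ ∈ S, x' ξ).Infinite

/-- The tower, defined by transfinite recursion with `Classical.epsilon`. -/
noncomputable def T (x' : Ordinal → Set ℕ) : Ordinal → Set ℕ :=
  WellFounded.fix Ordinal.lt_wf fun o ih =>
    Classical.epsilon fun s =>
      s ⊆ x' o ∧ Good x' s ∧ ∀ β (h : β < o), ASub s (ih β h)

theorem T_eq (x' : Ordinal → Set ℕ) (o : Ordinal) :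
    T x' o = Classical.epsilon fun s =>
      s ⊆ x' o ∧ Good x' s ∧ ∀ β (_ : β < o), ASub s (T x' β) :=
  WellFounded.fix_eq _ _ o

theorem aleph0_le_of_mem {c : Cardinal}
    (hc : c ∈ {c | ∃ F : Set (Set ℕ), IsFilterBase F ∧ ¬ HasPseudoInter F ∧ c = Cardinal.mk F}) :
    Cardinal.aleph0 ≤ c := by
  obtain ⟨F, hF, hnp, rfl⟩ := hc
  by_contra h
  push_neg at h
  have hfin : F.Finite := Cardinal.lt_aleph0_iff_set_finite.mp h
  apply hnp
  refine ⟨⋂ a ∈ hfin.toFinset, a, ?_, ?_⟩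
  · exact hF.2 _ (by simp)
  · intro a ha
    have hsub : (⋂ a ∈ hfin.toFinset, a) ⊆ a :=
      Set.iInter₂_subset a (by simpa using ha)
    unfold ASub
    rw [Set.diff_eq_empty.mpr hsub]
    exact Set.finite_empty

/-- The key recursion step, using `pNum < dStar`. -/
theorem step (hpd : pNum < dStar) (hp : Cardinal.aleph0 ≤ pNum)
    (x' : Ordinal → Set ℕ)
    (hfip' : ∀ S : Finset Ordinal, (∀ ξ ∈ S, ξ < pNum.ord) → (⋂ ξ ∈ S, x' ξ).Infinite)
    (o : Ordinal) (ho : o < pNum.ord) (t : Ordinal → Set ℕ)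
    (hgood : ∀ β, β < o → Good x' (t β))
    (hmono : ∀ β γ, β ≤ γ → γ < o → ASub (t γ) (t β)) :
    ∃ s, s ⊆ x' o ∧ Good x' s ∧ ∀ β, β < o → ASub s (t β) := by
  classical
  have hTinf : ∀ β, β < o → (t β).Infinite := by
    intro β hβ
    have := hgood β hβ ∅ (by simp)
    simpa using this
  set F : Set (Set ℕ) := insert Set.univ (t '' Set.Iio o) with hF
  -- finite intersections of members of F almost contain some t β (or are all univ)
  have hclaim : ∀ G : Finset (Set ℕ), ↑G ⊆ F →
      (∀ a ∈ G, a = Set.univ) ∨ ∃ β, β < o ∧ (t β \ ⋂ a ∈ G, a).Finite := by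
    intro G
    induction G using Finset.induction_on with
    | empty => intro _; left; simp
    | @insert a G hnm ih =>
      intro hsub
      have haF : a ∈ F := hsub (by simp)
      have hGF : (↑G : Set (Set ℕ)) ⊆ F := by
        intro b hb; apply hsub; simp only [Finset.coe_insert, Set.mem_insert_iff]
        right; exact hb
      rcases haF with rfl | ⟨γ, hγ, rfl⟩
      · rcases ih hGF with hall | ⟨β, hβ, hfin⟩
        · left; intro b hb
          rcases Finset.mem_insert.mp hb with rfl | hb
          · rfl
          · exact hall b hb
        · right; refine ⟨β, hβ, ?_⟩
          rw [Finset.set_biInter_insert, Set.univ_inter]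
          exact hfin
      · rcases ih hGF with hall | ⟨β, hβ, hfin⟩
        · right; refine ⟨γ, hγ, ?_⟩
          have hsub2 : t γ ⊆ ⋂ b ∈ G, b := by
            intro n _
            simp only [Set.mem_iInter]
            intro b hb; rw [hall b hb]; trivial
          rw [Finset.set_biInter_insert]
          rw [Set.diff_eq_empty.mpr (Set.subset_inter (subset_refl _) hsub2)]
          exact Set.finite_empty
        · right
          have hδ : max β γ < o := max_lt hβ hγ
          refine ⟨max β γ, hδ, ?_⟩
          have h1 : (t (max β γ) \ t γ).Finite := hmono γ (max β γ) (le_max_right _ _) hδ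
          have h2 : (t (max β γ) \ t β).Finite := hmono β (max β γ) (le_max_left _ _) hδ
          refine Set.Finite.subset ((h1.union h2).union hfin) ?_
          intro n hn
          rw [Finset.set_biInter_insert] at hn
          simp only [Set.mem_diff, Set.mem_inter_iff, not_and_or, Set.mem_union] at hn ⊢
          rcases hn with ⟨hnδ, h | h⟩
          · exact Or.inl (Or.inl ⟨hnδ, h⟩)
          · by_cases hβn : n ∈ t β
            · exact Or.inr ⟨hβn, h⟩
            · exact Or.inl (Or.inr ⟨hnδ, hβn⟩)
  have hFB : IsFilterBase F := by
    constructor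
    · intro a ha
      rcases ha with rfl | ⟨β, hβ, rfl⟩
      · exact Set.infinite_univ
      · exact hTinf β hβ
    · intro G hG
      rcases hclaim G hG with hall | ⟨β, hβ, hfin⟩
      · have : (⋂ a ∈ G, a) = Set.univ := by
          ext n
          simp only [Set.mem_iInter, Set.mem_univ, iff_true]
          intro b hb; rw [hall b hb]; trivial
        rw [this]; exact Set.infinite_univ
      · have hinfd : (t β \ (t β \ ⋂ a ∈ G, a)).Infinite := (hTinf β hβ).diff hfin
        refine hinfd.mono ?_
        intro n hn
        rcases hn with ⟨hn1, hn2⟩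
        simp only [Set.mem_diff, not_and, not_not] at hn2
        exact hn2 hn1
  -- cardinality of F
  have hFcard : Cardinal.mk F < pNum := by
    set e : o.ToType → Set ℕ := fun i => t ((Ordinal.ToType.mk (o := o)).symm i) with he
    have himg : t '' Set.Iio o = Set.range e := by
      ext s
      constructor
      · rintro ⟨β, hβ, rfl⟩
        exact ⟨(Ordinal.ToType.mk (o := o)) ⟨β, hβ⟩, by simp [he]⟩
      · rintro ⟨i, rfl⟩
        exact ⟨((Ordinal.ToType.mk (o := o)).symm i).1, ((Ordinal.ToType.mk (o := o)).symm i).2, rfl⟩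
    have h1 : Cardinal.mk F ≤ Cardinal.mk (t '' Set.Iio o) + 1 := Cardinal.mk_insert_le
    have h2 : Cardinal.mk ↥(t '' Set.Iio o) ≤ o.card := by
      rw [himg, ← Cardinal.mk_toType]
      exact Cardinal.mk_range_le
    have h3 : o.card + 1 < pNum :=
      Cardinal.add_lt_of_lt hp (Cardinal.lt_ord.mp ho)
        (lt_of_lt_of_le Cardinal.one_lt_aleph0 hp)
    exact lt_of_le_of_lt (h1.trans (add_le_add_left h2 1)) h3
  -- the family H
  set H : Set (Set ℕ) :=
    {h | ∃ S : Finset Ordinal, (∀ ξ ∈ S, ξ < pNum.ord) ∧ h = x' o ∩ ⋂ ξ ∈ S, x' ξ} with hHdef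
  have hHinf : ∀ h ∈ H, h.Infinite := by
    rintro h ⟨S, hS, rfl⟩
    have := hfip' (insert o S) (by
      intro ξ hξ
      rcases Finset.mem_insert.mp hξ with rfl | hξ
      · exact ho
      · exact hS ξ hξ)
    rwa [Finset.set_biInter_insert] at this
  have hHcard : Cardinal.mk H ≤ pNum := by
    set ι := (pNum.ord).ToType with hι
    have hmkι : Cardinal.mk ι = pNum := by
      rw [hι, Cardinal.mk_toType, Cardinal.card_ord]
    haveI : Infinite ι := by
      rw [Cardinal.infinite_iff, hmkι]; exact hp
    set g : Finset ι → Set ℕ := fun I =>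
      x' o ∩ ⋂ ξ ∈ I.image (fun i => (((Ordinal.ToType.mk (o := pNum.ord)).symm i) : Ordinal)), x' ξ
      with hg
    have hsurj : H ⊆ Set.range g := by
      rintro h ⟨S, hS, rfl⟩
      refine ⟨S.attach.image (fun ξ => (Ordinal.ToType.mk (o := pNum.ord)) ⟨ξ.1, hS ξ.1 ξ.2⟩), ?_⟩
      have himg2 : (S.attach.image (fun ξ => (Ordinal.ToType.mk (o := pNum.ord)) ⟨ξ.1, hS ξ.1 ξ.2⟩)).image
          (fun i => (((Ordinal.ToType.mk (o := pNum.ord)).symm i) : Ordinal)) = S := by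
        rw [Finset.image_image]
        ext ξ
        simp only [Finset.mem_image, Finset.mem_attach, true_and, Function.comp]
        constructor
        · rintro ⟨⟨ξ', hξ'⟩, rfl⟩
          simpa using hξ'
        · intro hξ
          exact ⟨⟨ξ, hξ⟩, by simp⟩
      rw [hg]
      simp only
      rw [himg2]
    calc Cardinal.mk H ≤ Cardinal.mk (Set.range g) := Cardinal.mk_le_mk_of_subset hsurj
      _ ≤ Cardinal.mk (Finset ι) := Cardinal.mk_range_le
      _ = Cardinal.mk ι := Cardinal.mk_finset_of_infinite ι
      _ = pNum := hmkι
  -- compatibility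
  have hcompat : ∀ a ∈ F, ∀ h ∈ H, (a ∩ h).Infinite := by
    rintro a ha h ⟨S, hS, rfl⟩
    rcases ha with rfl | ⟨β, hβ, rfl⟩
    · rw [Set.univ_inter]
      exact hHinf _ ⟨S, hS, rfl⟩
    · have := hgood β hβ (insert o S) (by
        intro ξ hξ
        rcases Finset.mem_insert.mp hξ with rfl | hξ
        · exact ho
        · exact hS ξ hξ)
      rwa [Finset.set_biInter_insert] at this
  -- apply pNum < dStar
  have hex : ∃ x0 : Set ℕ, (∀ a ∈ F, ASub x0 a) ∧ ∀ h ∈ H, (x0 ∩ h).Infinite := by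
    by_contra hcon
    have hmem : Cardinal.mk H ∈ {c | ∃ H : Set (Set ℕ), (∀ h ∈ H, h.Infinite) ∧
        (∃ F : Set (Set ℕ), IsFilterBase F ∧ Cardinal.mk F < pNum ∧
          (∀ a ∈ F, ∀ h ∈ H, (a ∩ h).Infinite) ∧
          ¬ ∃ x : Set ℕ, (∀ a ∈ F, ASub x a) ∧ ∀ h ∈ H, (x ∩ h).Infinite) ∧
        c = Cardinal.mk H} := ⟨H, hHinf, ⟨F, hFB, hFcard, hcompat, hcon⟩, rfl⟩
    have hds : dStar ≤ Cardinal.mk H := csInf_le' hmem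
    exact lt_irrefl pNum ((hpd.trans_le hds).trans_le hHcard)
  obtain ⟨x0, hx0F, hx0H⟩ := hex
  refine ⟨x0 ∩ x' o, Set.inter_subset_right, ?_, ?_⟩
  · intro S hS
    have := hx0H (x' o ∩ ⋂ ξ ∈ S, x' ξ) ⟨S, hS, rfl⟩
    rwa [Set.inter_assoc]
  · intro β hβ
    refine Set.Finite.subset (hx0F (t β) (Set.mem_insert_of_mem _ ⟨β, hβ, rfl⟩)) ?_
    intro n hn
    exact ⟨hn.1.1, hn.2⟩

theorem T_good (hpd : pNum < dStar) (hp : Cardinal.aleph0 ≤ pNum)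
    (x' : Ordinal → Set ℕ)
    (hfip' : ∀ S : Finset Ordinal, (∀ ξ ∈ S, ξ < pNum.ord) → (⋂ ξ ∈ S, x' ξ).Infinite)
    (o : Ordinal) :
    o < pNum.ord → (T x' o ⊆ x' o ∧ Good x' (T x' o) ∧
      ∀ β, β < o → ASub (T x' o) (T x' β)) := by
  induction o using Ordinal.induction with
  | _ o IH =>
    intro ho
    have hex := step hpd hp x' hfip' o ho (T x')
      (fun β hβ => (IH β hβ (hβ.trans ho)).2.1)
      (fun β γ hβγ hγ => by
        rcases eq_or_lt_of_le hβγ with rfl | h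
        · simp [ASub]
        · exact (IH γ hγ (hγ.trans ho)).2.2 β h)
    rw [T_eq]
    exact Classical.epsilon_spec hex

end Stmt19Aux

/-- If 𝔭 < 𝔡*, then every filter-base `(x_α)_{α<𝔭}` of cardinality 𝔭 can be
refined to a tower: there is a ⊇*-well-ordered (i.e. ⊆*-decreasing along the
enumeration) family `(t_α)_{α<𝔭}` of infinite sets with `t_α ⊆ x_α` and
`t_α ∩ x_ξ` infinite for all `ξ < 𝔭`. -/
theorem stmt19 (hpd : pNum < dStar)
    (x : ∀ o : Ordinal, o < pNum.ord → Set ℕ)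
    (hinf : ∀ o (ho : o < pNum.ord), (x o ho).Infinite)
    (hfip : ∀ F : Finset Ordinal, (∀ o ∈ F, o < pNum.ord) →
      (⋂ o ∈ F, ⋂ (ho : o < pNum.ord), x o ho).Infinite) :
    ∃ t : ∀ o : Ordinal, o < pNum.ord → Set ℕ,
      (∀ o o' (ho : o < pNum.ord) (ho' : o' < pNum.ord), o ≤ o' →
        ASub (t o' ho') (t o ho)) ∧
      (∀ o (ho : o < pNum.ord), (t o ho).Infinite ∧ t o ho ⊆ x o ho) ∧
      (∀ o (ho : o < pNum.ord), ∀ ξ (hξ : ξ < pNum.ord),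
        (t o ho ∩ x ξ hξ).Infinite) := by
  classical
  by_cases hP : pNum = 0
  · have hno : ∀ o : Ordinal, ¬ o < pNum.ord := by
      intro o
      rw [hP, Cardinal.ord_zero]
      exact not_lt_of_ge (zero_le (a := o))
    refine ⟨fun _ _ => ∅, ?_, ?_, ?_⟩
    · intro o o' ho ho' _; exact absurd ho (hno o)
    · intro o ho; exact absurd ho (hno o)
    · intro o ho; exact absurd ho (hno o)
  · have hne : {c | ∃ F : Set (Set ℕ), IsFilterBase F ∧ ¬ HasPseudoInter F ∧
        c = Cardinal.mk F}.Nonempty := by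
      by_contra h
      rw [Set.not_nonempty_iff_eq_empty] at h
      apply hP
      unfold pNum
      rw [h]
      simp
    have hp : Cardinal.aleph0 ≤ pNum :=
      le_csInf hne fun c hc => Stmt19Aux.aleph0_le_of_mem hc
    set x' : Ordinal → Set ℕ := fun o => if h : o < pNum.ord then x o h else Set.univ with hx'
    have hx'eq : ∀ o (ho : o < pNum.ord), x' o = x o ho := fun o ho => dif_pos ho
    have hfip' : ∀ S : Finset Ordinal, (∀ ξ ∈ S, ξ < pNum.ord) → (⋂ ξ ∈ S, x' ξ).Infinite := by
      intro S hS
      have hbase := hfip S hS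
      have heq : (⋂ ξ ∈ S, x' ξ) = ⋂ ξ ∈ S, ⋂ (h : ξ < pNum.ord), x ξ h := by
        ext n
        simp only [Set.mem_iInter]
        constructor
        · intro h ξ hξ hξ'
          rw [← hx'eq ξ hξ']
          exact h ξ hξ
        · intro h ξ hξ
          rw [hx'eq ξ (hS ξ hξ)]
          exact h ξ hξ (hS ξ hξ)
      rwa [heq]
    have tg := Stmt19Aux.T_good hpd hp x' hfip'
    refine ⟨fun o _ => Stmt19Aux.T x' o, ?_, ?_, ?_⟩
    · intro o o' ho ho' hle
      rcases eq_or_lt_of_le hle with rfl | h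
      · simp [ASub]
      · exact (tg o' ho').2.2 o h
    · intro o ho
      constructor
      · have := (tg o ho).2.1 ∅ (by simp)
        simpa using this
      · rw [← hx'eq o ho]
        exact (tg o ho).1
    · intro o ho ξ hξ
      have := (tg o ho).2.1 {ξ} (by simpa using hξ)
      rw [← hx'eq ξ hξ]
      simpa using this
end
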